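/- Let γ ∈ [0,1], P, Q, N > 0. Define R(γ) = ½ log(1 + γP/N) and Δ(γ) = ½ log(1 + (√Q + √((1−γ)P))² / (γP + N)). Then R(γ) + Δ(γ) = ½ log((γP + N + (√Q + √((1−γ)P))²)/N), and this sum is maximized over γ ∈ [0,1] at γ = 0, with maximum value ½ log(1 + (√P + √Q)²/N). -/

import Mathlib

/-- For the writing-on-dirty-paper tradeoff boundary
`R(γ) = ½ log(1 + γP/N)` and
`Δ(γ) = ½ log(1 + (√Q + √((1−γ)P))²/(γP + N))`, the sum satisfies
`R(γ) + Δ(γ) = ½ log((γP + N + (√Q + √((1−γ)P))²)/N)`, and it is maximized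
over `γ ∈ [0,1]` at `γ = 0` with value `½ log(1 + (√P + √Q)²/N)`. -/
theorem wdp_sum_rate_maximized_at_zero
    (P Q N : ℝ) (hP : 0 < P) (hQ : 0 < Q) (hN : 0 < N) :
    (∀ γ ∈ Set.Icc (0 : ℝ) 1,
      (1/2) * Real.log (1 + γ * P / N) +
        (1/2) * Real.log (1 + (Real.sqrt Q + Real.sqrt ((1 - γ) * P))^2 / (γ * P + N))
      = (1/2) * Real.log ((γ * P + N + (Real.sqrt Q + Real.sqrt ((1 - γ) * P))^2) / N)) ∧
    (∀ γ ∈ Set.Icc (0 : ℝ) 1,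
      (1/2) * Real.log (1 + γ * P / N) +
        (1/2) * Real.log (1 + (Real.sqrt Q + Real.sqrt ((1 - γ) * P))^2 / (γ * P + N))
      ≤ (1/2) * Real.log (1 + (Real.sqrt P + Real.sqrt Q)^2 / N)) ∧
    ((1/2) * Real.log (1 + (0 : ℝ) * P / N) +
        (1/2) * Real.log (1 + (Real.sqrt Q + Real.sqrt ((1 - 0) * P))^2 / (0 * P + N))
      = (1/2) * Real.log (1 + (Real.sqrt P + Real.sqrt Q)^2 / N)) := by
  have key : ∀ γ ∈ Set.Icc (0 : ℝ) 1,
      (1/2) * Real.log (1 + γ * P / N) +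
        (1/2) * Real.log (1 + (Real.sqrt Q + Real.sqrt ((1 - γ) * P))^2 / (γ * P + N))
      = (1/2) * Real.log ((γ * P + N + (Real.sqrt Q + Real.sqrt ((1 - γ) * P))^2) / N) := by
    intro γ hγ
    obtain ⟨h0, h1⟩ := hγ
    have hA : 0 < γ * P + N := by positivity
    set B := (Real.sqrt Q + Real.sqrt ((1 - γ) * P))^2 with hB
    have hBnn : 0 ≤ B := sq_nonneg _
    have e1 : 1 + γ * P / N = (γ * P + N) / N := by field_simp; ring
    have e2 : 1 + B / (γ * P + N) = (γ * P + N + B) / (γ * P + N) := by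
      field_simp
    rw [e1, e2, ← mul_add, ← Real.log_mul (by positivity) (by positivity)]
    congr 2
    field_simp
  refine ⟨key, ?_, ?_⟩
  · intro γ hγ
    rw [key γ hγ]
    obtain ⟨h0, h1⟩ := hγ
    have hA : 0 < γ * P + N := by positivity
    have hle : γ * P + N + (Real.sqrt Q + Real.sqrt ((1 - γ) * P))^2
        ≤ N + (Real.sqrt P + Real.sqrt Q)^2 := by
      have hsq1 : Real.sqrt ((1 - γ) * P) ^ 2 = (1 - γ) * P :=
        Real.sq_sqrt (by nlinarith)
      have hsq2 : Real.sqrt ((1 - γ) * P) ≤ Real.sqrt P := by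
        apply Real.sqrt_le_sqrt; nlinarith
      have hsqQ : Real.sqrt Q ^ 2 = Q := Real.sq_sqrt hQ.le
      have hsqP : Real.sqrt P ^ 2 = P := Real.sq_sqrt hP.le
      have hQnn : 0 ≤ Real.sqrt Q := Real.sqrt_nonneg _
      nlinarith [Real.sqrt_nonneg ((1-γ)*P), Real.sqrt_nonneg P]
    have e3 : 1 + (Real.sqrt P + Real.sqrt Q)^2 / N
        = (N + (Real.sqrt P + Real.sqrt Q)^2) / N := by field_simp
    rw [e3]
    have hdiv : (γ * P + N + (Real.sqrt Q + Real.sqrt ((1 - γ) * P))^2) / N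
        ≤ (N + (Real.sqrt P + Real.sqrt Q)^2) / N := by gcongr
    have := Real.log_le_log (by positivity) hdiv
    linarith
  · have h0 : (0:ℝ) * P / N = 0 := by simp
    have h1 : (1 - (0:ℝ)) * P = P := by ring
    rw [h1, show (0:ℝ) * P + N = N by ring, h0, add_comm (Real.sqrt Q)]
    simp
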